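/- Let C₁ ≥ C₂ > 0, ℓ > 0 and r ≥ 0. Let T be a tree with maximum degree Δ(T) ≤ C₁, such that all but at most r vertices of T have degree at most C₂, and such that |V(T)| ≥ ℓ. Then there exist pairwise disjoint vertex sets A₁, …, A_s ⊆ V(T) such that: V(T) = A₁ ∪ ⋯ ∪ A_s; the induced subgraph T[A_i] is connected for each 1 ≤ i ≤ s; ℓ ≤ |A_i| ≤ C₁·ℓ for each 1 ≤ i ≤ r; and ℓ ≤ |A_i| ≤ C₂·ℓ for each r < i ≤ s. -/

import Mathlib

open MeasureTheory Filter

noncomputable section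

/-- The `d`-dimensional hypercube graph `Q^d`, on vertex set `{0,1}^d`. -/
def cubeGraph (d : ℕ) : SimpleGraph (Fin d → Bool) where
  Adj x y := hammingDist x y = 1
  symm := ⟨fun x y h => (hammingDist_comm y x).trans h⟩
  loopless := ⟨fun x h => absurd ((hammingDist_self x).symm.trans h) (by norm_num)⟩

/-- The spanning subgraph of `G` consisting of those edges `e` with `ω e = true`. -/
def percolate {V : Type*} (G : SimpleGraph V) (ω : Sym2 V → Bool) : SimpleGraph V where
  Adj x y := G.Adj x y ∧ ω s(x, y) = true
  symm := by
    constructor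
    rintro x y ⟨h1, h2⟩
    exact ⟨h1.symm, by rwa [Sym2.eq_swap]⟩
  loopless := ⟨fun x h => G.loopless.irrefl x h.1⟩

/-- The Bernoulli measure on `Bool` with success probability `p` (truncated to `[0,1]`). -/
def bernoulliBool (p : ℝ) : Measure Bool :=
  (PMF.bernoulli (min (Real.toNNReal p) 1) (min_le_right _ _)).toMeasure

instance (p : ℝ) : IsProbabilityMeasure (bernoulliBool p) := by
  unfold bernoulliBool; infer_instance

/-- The probability measure on edge-configurations of the `d`-dimensional hypercube in which
each potential edge is retained independently with probability `p`; the configuration space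
is `Sym2 (Fin d → Bool) → Bool`, and `Q^d_p` is `percolate (cubeGraph d) ω`. -/
def cubeMeasure (d : ℕ) (p : ℝ) : Measure (Sym2 (Fin d → Bool) → Bool) :=
  Measure.pi fun _ => bernoulliBool p

/-- `C` is a largest connected component of `H`. -/
def IsLargestComponent {V : Type*} [Fintype V] (H : SimpleGraph V)
    (C : H.ConnectedComponent) : Prop :=
  ∀ C' : H.ConnectedComponent, C'.supp.ncard ≤ C.supp.ncard

/-- The edge boundary of the vertex set `S` in the graph `H`: the set of edges of `H` with
exactly one endpoint in `S`. -/
def edgeBoundary {V : Type*} (H : SimpleGraph V) (S : Set V) : Set (Sym2 V) :=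
  {e | e ∈ H.edgeSet ∧ ∃ x y, e = s(x, y) ∧ x ∈ S ∧ y ∉ S}

/-- The vertex boundary of the vertex set `S` in the graph `H`: the set of vertices outside
`S` having a neighbour in `S`. -/
def vertexBoundary {V : Type*} (H : SimpleGraph V) (S : Set V) : Set V :=
  {v | v ∉ S ∧ ∃ u ∈ S, H.Adj u v}

/-- The survival probability of a Galton–Watson branching process with Poisson(`c`) offspring
distribution: one minus the extinction probability, the extinction probability being the least
fixed point in `[0,1]` of the probability generating function `s ↦ exp (c * (s - 1))` of the
Poisson(`c`) distribution. -/
def poissonSurvival (c : ℝ) : ℝ :=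
  1 - sInf {s : ℝ | s ∈ Set.Icc (0 : ℝ) 1 ∧ Real.exp (c * (s - 1)) = s}

/-- `H` contains a complete minor of order `t`: there are `t` pairwise disjoint connected
branch sets with an edge of `H` between any two of them. -/
def HasCompleteMinor {V : Type*} (H : SimpleGraph V) (t : ℕ) : Prop :=
  ∃ B : Fin t → Set V,
    (∀ i, (H.induce (B i)).Connected) ∧
    (Pairwise fun i j => Disjoint (B i) (B j)) ∧
    (∀ i j, i ≠ j → ∃ x ∈ B i, ∃ y ∈ B j, H.Adj x y)


section TreeDecompositionAux
set_option linter.unusedSectionVars false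
set_option maxHeartbeats 1000000
open SimpleGraph

variable {V : Type*} [Fintype V] [DecidableEq V]

private lemma aux_reach_of_walk (T : SimpleGraph V) {S : Set V} {x y : V} (p : T.Walk x y)
    (hp : ∀ z ∈ p.support, z ∈ S) (hx : x ∈ S) (hy : y ∈ S) :
    (T.induce S).Reachable ⟨x, hx⟩ ⟨y, hy⟩ := by
  induction p with
  | nil => exact Reachable.refl _
  | @cons a b c h q ih =>
      have hb : b ∈ S := hp b (by simp)
      have hadj : (T.induce S).Adj ⟨a, hx⟩ ⟨b, hb⟩ := h
      exact hadj.reachable.trans (ih (fun z hz => hp z (by simp [hz])) hb hy)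

private lemma aux_reach_mono (T : SimpleGraph V) {S S' : Set V} (h : S ⊆ S') {x y : V}
    (hx : x ∈ S) (hy : y ∈ S) (hr : (T.induce S).Reachable ⟨x, hx⟩ ⟨y, hy⟩) :
    (T.induce S').Reachable ⟨x, h hx⟩ ⟨y, h hy⟩ :=
  hr.map (T.induceHomOfLE h).toHom

private lemma aux_conn_to (T : SimpleGraph V) {S : Set V} {v : V} (hv : v ∈ S)
    (h : ∀ x (hx : x ∈ S), (T.induce S).Reachable ⟨x, hx⟩ ⟨v, hv⟩) :
    (T.induce S).Connected := by
  haveI : Nonempty ↥S := ⟨⟨v, hv⟩⟩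
  exact Connected.mk (fun a b => (h a.1 a.2).trans (h b.1 b.2).symm)

private lemma aux_cross (T : SimpleGraph V) {S B : Set V} (hconn : (T.induce S).Connected)
    (hBS : B ⊆ S) (hB : B.Nonempty) (hSB : (S \ B).Nonempty) :
    ∃ x ∈ B, ∃ y ∈ S \ B, T.Adj x y := by
  obtain ⟨a, ha⟩ := hB
  obtain ⟨b, hb⟩ := hSB
  obtain ⟨p⟩ := hconn.preconnected ⟨a, hBS ha⟩ ⟨b, hb.1⟩
  obtain ⟨d, _, h1, h2⟩ := p.exists_boundary_dart {w : ↥S | (w : V) ∈ B} ha hb.2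
  exact ⟨d.fst.1, h1, d.snd.1, ⟨d.snd.2, h2⟩, d.adj⟩

private lemma aux_comp_reach (T : SimpleGraph V) {S : Set V}
    (c : (T.induce S).ConnectedComponent) {x y : V}
    (hx : x ∈ Subtype.val '' c.supp) (hy : y ∈ Subtype.val '' c.supp) :
    (T.induce (Subtype.val '' c.supp)).Reachable ⟨x, hx⟩ ⟨y, hy⟩ := by
  obtain ⟨x', hx', rfl⟩ := hx
  obtain ⟨y', hy', rfl⟩ := hy
  rw [ConnectedComponent.mem_supp_iff] at hx' hy'
  have hr : (T.induce S).Reachable x' y' := ConnectedComponent.exact (hx'.trans hy'.symm)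
  obtain ⟨q⟩ := hr
  let f : T.induce S →g T := ⟨Subtype.val, fun h => h⟩
  have hsupp : ∀ z ∈ (q.map f).support, z ∈ Subtype.val '' c.supp := by
    intro z hz
    rw [Walk.support_map, List.mem_map] at hz
    obtain ⟨z', hz', rfl⟩ := hz
    refine ⟨z', ?_, rfl⟩
    rw [ConnectedComponent.mem_supp_iff, ← hx']
    exact (ConnectedComponent.sound ⟨q.takeUntil z' hz'⟩).symm
  exact aux_reach_of_walk T (q.map f) hsupp ⟨x', by rw [ConnectedComponent.mem_supp_iff]; exact hx', rfl⟩
    ⟨y', by rw [ConnectedComponent.mem_supp_iff]; exact hy', rfl⟩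

private lemma aux_arith {ℓ d k : ℕ} (hℓ : 0 < ℓ) (h1 : k ≤ d) (hd : 1 ≤ d)
    (j : ℕ) (hj : j ≤ ℓ - 1) (hj' : k + 1 ≤ d ∨ j = 0) :
    k * (ℓ - 1) + 1 + j ≤ d * ℓ := by
  obtain ⟨l', rfl⟩ : ∃ l', ℓ = l' + 1 := ⟨ℓ - 1, by omega⟩
  obtain ⟨e, rfl⟩ : ∃ e, d = e + 1 := ⟨d - 1, by omega⟩
  simp only [Nat.add_sub_cancel] at *
  rcases hj' with h | rfl
  · have hk : k ≤ e := by omega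
    have := Nat.mul_le_mul_right l' hk
    nlinarith
  · have := Nat.mul_le_mul_right l' h1
    nlinarith

private lemma aux_extract (T : SimpleGraph V) [DecidableRel T.Adj] {ℓ : ℕ} (hℓ : 0 < ℓ)
    (s : Set V) (hconn : (T.induce s).Connected) (hcard : ℓ ≤ s.ncard) (h2 : 2 ≤ s.ncard) :
    (∃ v ∈ s, s.ncard ≤ T.degree v * ℓ) ∨
    (∃ A : Set V, A ⊆ s ∧ (T.induce A).Connected ∧ (T.induce (s \ A)).Connected ∧
      ℓ ≤ A.ncard ∧ ℓ ≤ (s \ A).ncard ∧ A.ncard < s.ncard ∧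
      ∃ v ∈ A, A.ncard ≤ T.degree v * ℓ) := by
  classical
  set F : Set (Set V) := {A | A ⊆ s ∧ A.Nonempty ∧ (T.induce A).Connected ∧ ℓ ≤ A.ncard ∧
    ((s \ A).Nonempty → (T.induce (s \ A)).Connected)} with hF
  have hsF : s ∈ F := by
    refine ⟨subset_rfl, Set.nonempty_of_ncard_ne_zero (by omega), hconn, hcard, ?_⟩
    intro h
    simp only [Set.diff_self] at h
    exact absurd h Set.not_nonempty_empty
  have hne : (Set.ncard '' F).Nonempty := ⟨s.ncard, s, hsF, rfl⟩
  obtain ⟨A, hAF, hAcard⟩ := Nat.sInf_mem hne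
  have hmin : ∀ B ∈ F, A.ncard ≤ B.ncard := fun B hB => by
    rw [hAcard]; exact Nat.sInf_le ⟨B, hB, rfl⟩
  obtain ⟨hAs, hAne, hAconn, hAcard', hAcompl⟩ := hAF
  obtain ⟨v, hvA, hvp⟩ : ∃ v ∈ A, ((s \ A).Nonempty → ∃ p ∈ s \ A, T.Adj v p) := by
    by_cases hne' : (s \ A).Nonempty
    · obtain ⟨x, hx, y, hy, hadj⟩ := aux_cross T hconn hAs hAne hne'
      exact ⟨x, hx, fun _ => ⟨y, hy, hadj⟩⟩
    · obtain ⟨w, hw⟩ := hAne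
      exact ⟨w, hw, fun h => absurd h hne'⟩
  set D : Set V := A \ {v} with hD
  haveI : Fintype (T.induce D).ConnectedComponent := Fintype.ofFinite _
  set img : (T.induce D).ConnectedComponent → Set V := fun c => Subtype.val '' c.supp with himg
  have himgD : ∀ c, img c ⊆ D := by rintro c z ⟨w, _, rfl⟩; exact w.2
  have himg_mem : ∀ w : ↥D, (w : V) ∈ img ((T.induce D).connectedComponentMk w) :=
    fun w => ⟨w, by rw [ConnectedComponent.mem_supp_iff], rfl⟩
  have himg_eq : ∀ (c) (w : ↥D), (w : V) ∈ img c → (T.induce D).connectedComponentMk w = c := by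
    rintro c w ⟨w', hw', hww⟩
    rw [← Subtype.val_injective hww]
    exact (ConnectedComponent.mem_supp_iff _ _).mp hw'
  have hDs : D ⊆ s := Set.diff_subset.trans hAs
  have hg : ∀ c, ∃ x, x ∈ img c ∧ T.Adj v x := by
    intro c
    obtain ⟨w, hwc⟩ := c.exists_rep
    have h1 : img c ⊆ A := (himgD c).trans Set.diff_subset
    have h2' : (img c).Nonempty := ⟨w, by rw [← hwc]; exact himg_mem w⟩
    have h3 : (A \ img c).Nonempty := ⟨v, hvA, fun hv' => (himgD c hv').2 rfl⟩
    obtain ⟨x, hx, y, hy, hadj⟩ := aux_cross T hAconn h1 h2' h3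
    by_cases hyv : y = v
    · subst hyv; exact ⟨x, hx, hadj.symm⟩
    · exfalso
      have hxD : x ∈ D := himgD _ hx
      have hyD : y ∈ D := ⟨hy.1, hyv⟩
      have hmkeq : (T.induce D).connectedComponentMk ⟨x, hxD⟩
          = (T.induce D).connectedComponentMk ⟨y, hyD⟩ := ConnectedComponent.connectedComponentMk_eq_of_adj hadj
      have hcx := himg_eq _ ⟨x, hxD⟩ hx
      exact hy.2 (by rw [← hcx, hmkeq]; exact himg_mem ⟨y, hyD⟩)
  choose g hg1 hg2 using hg
  have hginj : Function.Injective g := by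
    intro c c' h
    have h1 := himg_eq c ⟨g c, himgD c (hg1 c)⟩ (hg1 c)
    have h2' := himg_eq c' ⟨g c', himgD c' (hg1 c')⟩ (hg1 c')
    rw [← h1, ← h2']
    congr 1
    exact Subtype.ext h
  set m := Fintype.card (T.induce D).ConnectedComponent with hm
  have hAfin : A.Finite := Set.toFinite A
  have hsfin : s.Finite := Set.toFinite s
  have hsmall : ∀ c, (img c).ncard ≤ ℓ - 1 := by
    intro c
    by_contra hbig
    push_neg at hbig
    have hℓc : ℓ ≤ (img c).ncard := by omega
    have hcne : (img c).Nonempty := Set.nonempty_of_ncard_ne_zero (by omega)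
    have hcconn : (T.induce (img c)).Connected := by
      obtain ⟨x, hx⟩ := hcne
      exact aux_conn_to T hx (fun y hy => aux_comp_reach T c hy hx)
    have hvmem : v ∈ s \ img c := ⟨hAs hvA, fun h => (himgD c h).2 rfl⟩
    have hcompl : (T.induce (s \ img c)).Connected := by
      apply aux_conn_to T hvmem
      intro x hx
      by_cases hxA : x ∈ A
      · by_cases hxv : x = v
        · subst hxv; exact Reachable.refl _
        · have hxD : x ∈ D := ⟨hxA, hxv⟩
          have hcc' : (T.induce D).connectedComponentMk ⟨x, hxD⟩ ≠ c :=
            fun h => hx.2 (h ▸ himg_mem ⟨x, hxD⟩)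
          have hsub : img ((T.induce D).connectedComponentMk ⟨x, hxD⟩) ⊆ s \ img c := by
            intro z hz
            refine ⟨hDs (himgD _ hz), fun hzc => hcc' ?_⟩
            have e1 := himg_eq _ ⟨z, himgD _ hz⟩ hz
            have e2 := himg_eq c ⟨z, himgD _ hz⟩ hzc
            rw [← e1, e2]
          have r1 := aux_comp_reach T ((T.induce D).connectedComponentMk ⟨x, hxD⟩)
            (himg_mem ⟨x, hxD⟩) (hg1 _)
          have r2 := aux_reach_mono T hsub _ _ r1
          have hadj : (T.induce (s \ img c)).Adj ⟨g _, hsub (hg1 _)⟩ ⟨v, hvmem⟩ := (hg2 _).symm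
          exact r2.trans hadj.reachable
      · have hxsA : x ∈ s \ A := ⟨hx.1, hxA⟩
        obtain ⟨p, hp, hpadj⟩ := hvp ⟨x, hxsA⟩
        have r1 : (T.induce (s \ A)).Reachable ⟨x, hxsA⟩ ⟨p, hp⟩ :=
          (hAcompl ⟨x, hxsA⟩).preconnected _ _
        have hsub : s \ A ⊆ s \ img c := fun z hz => ⟨hz.1, fun h => hz.2 ((himgD c h).1)⟩
        have r2 := aux_reach_mono T hsub _ _ r1
        have hadj : (T.induce (s \ img c)).Adj ⟨p, hsub hp⟩ ⟨v, hvmem⟩ := hpadj.symm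
        exact r2.trans hadj.reachable
    have hcF : img c ∈ F := ⟨(himgD c).trans hDs, hcne, hcconn, hℓc, fun _ => hcompl⟩
    have hminc := hmin _ hcF
    have hssub : img c ⊂ A :=
      HasSubset.Subset.ssubset_of_ne ((himgD c).trans Set.diff_subset)
        (fun h => (himgD c (h ▸ hvA)).2 rfl)
    have hlt : (img c).ncard < A.ncard := Set.ncard_lt_ncard hssub hAfin
    omega
  have hDcard : D.ncard ≤ m * (ℓ - 1) := by
    have h1 : D.ncard = (Finset.univ : Finset ↥D).card := by
      rw [Set.ncard_eq_toFinset_card', Set.toFinset_card, Finset.card_univ]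
    have h2' : (Finset.univ : Finset ↥D).card =
        ∑ c : (T.induce D).ConnectedComponent,
          (Finset.univ.filter (fun w : ↥D => (T.induce D).connectedComponentMk w = c)).card :=
      Finset.card_eq_sum_card_fiberwise (fun x _ => Finset.mem_univ _)
    have h3 : ∀ c, (Finset.univ.filter
        (fun w : ↥D => (T.induce D).connectedComponentMk w = c)).card = (img c).ncard := by
      intro c
      have : img c = Subtype.val '' c.supp := rfl
      rw [this, Set.ncard_image_of_injective _ Subtype.val_injective,
        Set.ncard_eq_toFinset_card']
      congr 1
      ext w
      simp [ConnectedComponent.mem_supp_iff]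
    calc D.ncard = (Finset.univ : Finset ↥D).card := h1
      _ = _ := h2'
      _ ≤ ∑ _c : (T.induce D).ConnectedComponent, (ℓ - 1) :=
            Finset.sum_le_sum (fun c _ => by rw [h3 c]; exact hsmall c)
      _ = m * (ℓ - 1) := by rw [Finset.sum_const, Finset.card_univ, smul_eq_mul]
  have himgA : ∀ c, g c ∈ A := fun c => (himgD c (hg1 c)).1
  have hgnbr : Finset.univ.image g ⊆ T.neighborFinset v := by
    intro x hx
    obtain ⟨c, _, rfl⟩ := Finset.mem_image.mp hx
    rw [mem_neighborFinset]; exact hg2 c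
  have hmdeg : m ≤ T.degree v := by
    rw [← card_neighborFinset_eq_degree]
    calc m = (Finset.univ.image g).card := by
          rw [Finset.card_image_of_injective _ hginj, Finset.card_univ]
      _ ≤ _ := Finset.card_le_card hgnbr
  have hmdeg2 : (s \ A).Nonempty → m + 1 ≤ T.degree v := by
    intro hne'
    obtain ⟨p, hp, hpadj⟩ := hvp hne'
    have hpni : p ∉ Finset.univ.image g := by
      intro h
      obtain ⟨c, _, hc⟩ := Finset.mem_image.mp h
      exact hp.2 (hc ▸ himgA c)
    have hcard' : (insert p (Finset.univ.image g)).card ≤ (T.neighborFinset v).card := by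
      apply Finset.card_le_card
      intro x hx
      rcases Finset.mem_insert.mp hx with rfl | hx
      · rw [mem_neighborFinset]; exact hpadj
      · exact hgnbr hx
    rw [Finset.card_insert_of_notMem hpni, Finset.card_image_of_injective _ hginj,
      Finset.card_univ, card_neighborFinset_eq_degree] at hcard'
    omega
  have hAD : D.ncard + 1 = A.ncard := Set.ncard_diff_singleton_add_one hvA hAfin
  have hsplit : (s \ A).ncard + A.ncard = s.ncard := Set.ncard_diff_add_ncard_of_subset hAs hsfin
  by_cases hne' : (s \ A).Nonempty
  · have hd2 := hmdeg2 hne'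
    by_cases hrem : ℓ ≤ (s \ A).ncard
    · right
      refine ⟨A, hAs, hAconn, hAcompl hne', hAcard', hrem, ?_, v, hvA, ?_⟩
      · have h0 : 0 < (s \ A).ncard := by omega
        omega
      · calc A.ncard = D.ncard + 1 := hAD.symm
          _ ≤ m * (ℓ - 1) + 1 + 0 := by omega
          _ ≤ T.degree v * ℓ := aux_arith hℓ (by omega) (by omega) 0 (by omega) (Or.inl hd2)
    · left
      refine ⟨v, hAs hvA, ?_⟩
      have hj : (s \ A).ncard ≤ ℓ - 1 := by omega
      calc s.ncard = (s \ A).ncard + A.ncard := hsplit.symm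
        _ = D.ncard + 1 + (s \ A).ncard := by omega
        _ ≤ m * (ℓ - 1) + 1 + (s \ A).ncard := by omega
        _ ≤ T.degree v * ℓ := aux_arith hℓ (by omega) (by omega) _ hj (Or.inl hd2)
  · left
    have hAeq : A = s := by
      rw [Set.not_nonempty_iff_eq_empty, Set.diff_eq_empty] at hne'
      exact Set.Subset.antisymm hAs hne'
    have hAcard2 : A.ncard = s.ncard := by rw [hAeq]
    have hDne : D.Nonempty := by
      rw [← Set.ncard_pos (hsfin.subset hDs)]
      omega
    obtain ⟨w, hw⟩ := hDne
    have hdpos : 0 < T.degree v :=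
      (T.degree_pos_iff_exists_adj v).mpr ⟨g ((T.induce D).connectedComponentMk ⟨w, hw⟩), hg2 _⟩
    refine ⟨v, hAs hvA, ?_⟩
    calc s.ncard = A.ncard := hAcard2.symm
      _ = D.ncard + 1 := hAD.symm
      _ ≤ m * (ℓ - 1) + 1 + 0 := by omega
      _ ≤ T.degree v * ℓ := aux_arith hℓ hmdeg hdpos 0 (by omega) (Or.inr rfl)

private lemma aux_peel (T : SimpleGraph V) [DecidableRel T.Adj] (C₁ C₂ ℓ : ℕ) (hC₂ : 0 < C₂)
    (hC : C₂ ≤ C₁) (hℓ : 0 < ℓ) (hΔ : ∀ v : V, T.degree v ≤ C₁) :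
    ∀ (n : ℕ) (s : Set V), s.ncard ≤ n → (T.induce s).Connected → ℓ ≤ s.ncard →
    ∃ L : List (Set V), L.Pairwise Disjoint ∧ (∀ x : V, x ∈ s ↔ ∃ A ∈ L, x ∈ A) ∧
      ∀ A ∈ L, (T.induce A).Connected ∧ ℓ ≤ A.ncard ∧ A.ncard ≤ C₁ * ℓ ∧
        (C₂ * ℓ < A.ncard → ∃ v ∈ A, C₂ < T.degree v) := by
  intro n
  induction n with
  | zero => intro s h0 _ hl; omega
  | succ n ih =>
    intro s hn hconn hcard
    by_cases hsm : s.ncard ≤ C₂ * ℓ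
    · refine ⟨[s], List.pairwise_singleton _ _, by intro x; simp, ?_⟩
      intro A hA
      rw [List.mem_singleton] at hA
      subst hA
      exact ⟨hconn, hcard, hsm.trans (Nat.mul_le_mul_right ℓ hC), fun h => absurd hsm (by omega)⟩
    · push_neg at hsm
      have h1 : 1 ≤ C₂ * ℓ := Nat.mul_pos hC₂ hℓ
      have h2 : 2 ≤ s.ncard := by omega
      rcases aux_extract T hℓ s hconn hcard h2 with ⟨v, hv, hb⟩ |
        ⟨A, hAs, hconnA, hconnC, hlA, hlC, hlt, v, hvA, hbound⟩
      · refine ⟨[s], List.pairwise_singleton _ _, by intro x; simp, ?_⟩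
        intro B hB
        rw [List.mem_singleton] at hB; subst hB
        refine ⟨hconn, hcard, hb.trans (Nat.mul_le_mul_right ℓ (hΔ v)), fun _ => ⟨v, hv, ?_⟩⟩
        exact lt_of_mul_lt_mul_right (lt_of_lt_of_le hsm hb) (Nat.zero_le ℓ)
      · have hrec : (s \ A).ncard ≤ n := by
          have := Set.ncard_diff_add_ncard_of_subset hAs (Set.toFinite s)
          omega
        obtain ⟨L, hLpw, hLmem, hLprop⟩ := ih (s \ A) hrec hconnC hlC
        refine ⟨A :: L, ?_, ?_, ?_⟩
        · refine List.Pairwise.cons ?_ hLpw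
          intro B hB
          have hBsub : B ⊆ s \ A := fun x hx => (hLmem x).mpr ⟨B, hB, hx⟩
          exact Set.disjoint_left.mpr (fun x hxA hxB => (hBsub hxB).2 hxA)
        · intro x
          constructor
          · intro hx
            by_cases hxA : x ∈ A
            · exact ⟨A, List.mem_cons_self, hxA⟩
            · obtain ⟨B, hB, hxB⟩ := (hLmem x).mp ⟨hx, hxA⟩
              exact ⟨B, List.mem_cons_of_mem _ hB, hxB⟩
          · rintro ⟨B, hB, hxB⟩
            rcases List.mem_cons.mp hB with rfl | hB
            · exact hAs hxB
            · exact ((hLmem x).mpr ⟨B, hB, hxB⟩).1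
        · intro B hB
          rcases List.mem_cons.mp hB with rfl | hB
          · refine ⟨hconnA, hlA, hbound.trans (Nat.mul_le_mul_right ℓ (hΔ v)),
              fun h => ⟨v, hvA, ?_⟩⟩
            exact lt_of_mul_lt_mul_right (lt_of_lt_of_le h hbound) (Nat.zero_le ℓ)
          · exact hLprop B hB


end TreeDecompositionAux

set_option maxHeartbeats 1000000 in
/-- decomposing a tree of maximum degree at most `C₁`, all but at most `r` of
whose vertices have degree at most `C₂`, into connected pieces of controlled sizes. -/
theorem tree_decomposition {V : Type*} [Fintype V] [DecidableEq V]
    (T : SimpleGraph V) [DecidableRel T.Adj] (hT : T.IsTree)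
    (C₁ C₂ ℓ r : ℕ) (hC₂ : 0 < C₂) (hC : C₂ ≤ C₁) (hℓ : 0 < ℓ)
    (hΔ : ∀ v : V, T.degree v ≤ C₁)
    (hdeg : ({v : V | C₂ < T.degree v}).ncard ≤ r)
    (hcard : ℓ ≤ Fintype.card V) :
    ∃ (s : ℕ) (A : Fin s → Set V),
      (Pairwise fun i j => Disjoint (A i) (A j)) ∧
      (⋃ i, A i) = Set.univ ∧
      (∀ i, (T.induce (A i)).Connected) ∧
      (∀ i, ℓ ≤ (A i).ncard) ∧
      (∀ i : Fin s, (i : ℕ) < r → (A i).ncard ≤ C₁ * ℓ) ∧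
      (∀ i : Fin s, r ≤ (i : ℕ) → (A i).ncard ≤ C₂ * ℓ) := by
  classical
  have hconn : (T.induce (Set.univ : Set V)).Connected := by
    rw [(SimpleGraph.induceUnivIso T).connected_iff]
    exact hT.isConnected
  have huniv : ℓ ≤ (Set.univ : Set V).ncard := by
    rw [Set.ncard_univ, Nat.card_eq_fintype_card]; exact hcard
  obtain ⟨L, hLpw, hLmem, hLprop⟩ :=
    aux_peel T C₁ C₂ ℓ hC₂ hC hℓ hΔ (Set.univ : Set V).ncard Set.univ le_rfl hconn huniv
  set big : Set V → Bool := fun A => decide (C₂ * ℓ < A.ncard) with hbig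
  set B : List (Set V) := L.filter big with hB
  set S : List (Set V) := L.filter (fun A => !big A) with hS
  set L' : List (Set V) := B ++ S with hL'
  have hperm : List.Perm L' L := List.filter_append_perm big L
  have hpw' : L'.Pairwise Disjoint :=
    (hperm.pairwise_iff (fun h => h.symm)).mpr hLpw
  -- count of big pieces
  have hBpw : B.Pairwise Disjoint := hLpw.sublist (List.filter_sublist)
  have hwit : ∀ i : Fin B.length, ∃ v, v ∈ B.get i ∧ C₂ < T.degree v := by
    intro i
    have hmB : B.get i ∈ B := List.get_mem _ _
    have hmL : B.get i ∈ L := List.mem_of_mem_filter hmB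
    have hbigi : C₂ * ℓ < (B.get i).ncard := by
      have := List.of_mem_filter hmB
      rw [hbig] at this
      exact of_decide_eq_true this
    exact (hLprop _ hmL).2.2.2 hbigi
  choose w hw1 hw2 using hwit
  have hwinj : Function.Injective w := by
    intro i j hij
    by_contra hne
    have hdisj : Disjoint (B.get i) (B.get j) := by
      rcases lt_or_gt_of_ne (fun h => hne (Fin.ext h)) with h | h
      · exact List.pairwise_iff_get.mp hBpw i j h
      · exact (List.pairwise_iff_get.mp hBpw j i h).symm
    exact Set.disjoint_left.mp hdisj (hw1 i) (hij ▸ hw1 j)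
  have hBle : B.length ≤ r := by
    have hcardeq : (Finset.univ.image w).card = B.length := by
      rw [Finset.card_image_of_injective _ hwinj, Finset.card_univ, Fintype.card_fin]
    have hsubset : Finset.univ.image w ⊆ {v : V | C₂ < T.degree v}.toFinset := by
      intro x hx
      obtain ⟨i, _, rfl⟩ := Finset.mem_image.mp hx
      rw [Set.mem_toFinset]
      exact hw2 i
    calc B.length = (Finset.univ.image w).card := hcardeq.symm
      _ ≤ {v : V | C₂ < T.degree v}.toFinset.card := Finset.card_le_card hsubset
      _ = ({v : V | C₂ < T.degree v}).ncard := (Set.ncard_eq_toFinset_card' _).symm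
      _ ≤ r := hdeg
  refine ⟨L'.length, fun i => L'.get i, ?_, ?_, ?_, ?_, ?_, ?_⟩
  · intro i j hij
    rcases lt_or_gt_of_ne (fun h => hij (Fin.ext h)) with h | h
    · exact List.pairwise_iff_get.mp hpw' i j h
    · exact (List.pairwise_iff_get.mp hpw' j i h).symm
  · apply Set.eq_univ_of_forall
    intro x
    rw [Set.mem_iUnion]
    obtain ⟨A, hA, hxA⟩ := (hLmem x).mp (Set.mem_univ x)
    obtain ⟨i, hi⟩ := List.mem_iff_get.mp (hperm.mem_iff.mpr hA)
    exact ⟨i, hi ▸ hxA⟩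
  · intro i
    exact (hLprop _ (hperm.subset (List.get_mem _ _))).1
  · intro i
    exact (hLprop _ (hperm.subset (List.get_mem _ _))).2.1
  · intro i _
    exact (hLprop _ (hperm.subset (List.get_mem _ _))).2.2.1
  · intro i hi
    have hiB : B.length ≤ (i : ℕ) := le_trans hBle hi
    have hlen : L'.length = B.length + S.length := by
      rw [hL']; exact List.length_append
    have hgetS : L'.get i ∈ S := by
      have h1 : L'.get i = S[(i : ℕ) - B.length]'(by
          have := i.isLt
          omega) := by
        rw [List.get_eq_getElem]
        exact List.getElem_append_right hiB
      rw [h1]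
      exact List.getElem_mem _
    have hns : big (L'.get i) = false := by
      have := List.of_mem_filter hgetS
      simpa using this
    rw [hbig] at hns
    exact Nat.le_of_not_lt (of_decide_eq_false hns)


end
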